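/- Let π_p ⊆ Λ²W* be the subspace spanned by e₁∧e₄ + e₂∧e₃, e₁∧e₅ + e₃∧e₄, e₁∧e₆ + e₂∧e₄. Let A ⊆ Λ²W* be a linear subspace such that every ω ∈ A has rank at most 4, and suppose A contains g·π_p for some g ∈ GL(W). Then there exists a 3-dimensional subspace U of W such that α(u,u') = 0 for all α ∈ A and all u, u' ∈ U; in particular A is nonstable. -/

import Mathlib

open Matrix

noncomputable section

abbrev W : Type := Fin 6 → ℂ
abbrev Form : Type := Matrix (Fin 6) (Fin 6) ℂ

/-- The skew-symmetric bilinear form associated to a matrix: `ω(u,v) = uᵀ M v`. -/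
def Form.apply (M : Form) (u v : W) : ℂ := u ⬝ᵥ M *ᵥ v

/-- A matrix represents a skew-symmetric (alternating) bilinear form iff `Mᵀ = -M`. -/
def Form.IsSkew (M : Form) : Prop := Mᵀ = -M

/-- Standard basis vectors of `W` (also used as the dual basis of `W*`). -/
def e (i : Fin 6) : Fin 6 → ℂ := Pi.single i 1

/-- Wedge of two covectors: `(φ∧ψ)(u,u') = φ(u)ψ(u') − ψ(u)φ(u')`. -/
def wedge (φ ψ : Fin 6 → ℂ) : Form := vecMulVec φ ψ - vecMulVec ψ φ

/-- Kernel of the linear map `u ↦ ω(u,·)`, i.e. of `u ↦ Mᵀ u`. -/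
def Form.kernel (M : Form) : Submodule ℂ W := LinearMap.ker (Matrix.mulVecLin Mᵀ)

/-- The action of `g ∈ GL(W)` on forms: `(g·ω)(u,u') = ω(gu,gu')`, as a linear map on forms. -/
def actLin (g : Matrix (Fin 6) (Fin 6) ℂ) : Form →ₗ[ℂ] Form where
  toFun M := gᵀ * M * g
  map_add' M N := by simp [add_mul, mul_add]
  map_smul' c M := by simp [mul_smul_comm, smul_mul_assoc]

/-- The geometric criterion for non-stability (Theorem 2.3(2)). -/
def Nonstable (A : Submodule ℂ Form) : Prop :=
  ∃ s : ℕ, s ∈ ({1, 2, 3} : Set ℕ) ∧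
    ∃ U U' : Submodule ℂ W, U ≤ U' ∧
      Module.finrank ℂ U = s ∧ Module.finrank ℂ U' = 6 - s ∧
      ∀ M ∈ A, ∀ u ∈ U, ∀ u' ∈ U', Form.apply M u u' = 0

/-- The geometric criterion for non-semistability (Theorem 2.3(1)). -/
def NonSemistable (A : Submodule ℂ Form) : Prop :=
  ∃ s : ℕ, s ∈ ({1, 2, 3} : Set ℕ) ∧
    ∃ U U' : Submodule ℂ W, U ≤ U' ∧
      Module.finrank ℂ U = s ∧ Module.finrank ℂ U' = 7 - s ∧
      ∀ M ∈ A, ∀ u ∈ U, ∀ u' ∈ U', Form.apply M u u' = 0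

/-- The plane `π_g` of general type. -/
def pi_g : Submodule ℂ Form :=
  Submodule.span ℂ {wedge (e 0) (e 3) + wedge (e 1) (e 4),
    wedge (e 0) (e 5) + wedge (e 2) (e 4),
    wedge (e 1) (e 5) - wedge (e 2) (e 3)}


/-- The plane `π_p`. -/
def pi_p : Submodule ℂ Form :=
  Submodule.span ℂ {wedge (e 0) (e 3) + wedge (e 1) (e 2),
    wedge (e 0) (e 4) + wedge (e 2) (e 3),
    wedge (e 0) (e 5) + wedge (e 1) (e 3)}

/-- The Pfaffian of a 6×6 matrix (using only the upper-triangular entries). -/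
def pf (M : Form) : ℂ :=
  M 0 1 * M 2 3 * M 4 5 - M 0 1 * M 2 4 * M 3 5 + M 0 1 * M 2 5 * M 3 4 - M 0 2 * M 1 3 * M 4 5 + M 0 2 * M 1 4 * M 3 5 - M 0 2 * M 1 5 * M 3 4 + M 0 3 * M 1 2 * M 4 5 - M 0 3 * M 1 4 * M 2 5 + M 0 3 * M 1 5 * M 2 4 - M 0 4 * M 1 2 * M 3 5 + M 0 4 * M 1 3 * M 2 5 - M 0 4 * M 1 5 * M 2 3 + M 0 5 * M 1 2 * M 3 4 - M 0 5 * M 1 3 * M 2 4 + M 0 5 * M 1 4 * M 2 3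

set_option maxHeartbeats 4000000 in
set_option maxRecDepth 100000 in
private lemma det6_skew (a01 a02 a03 a04 a05 a12 a13 a14 a15 a23 a24 a25 a34 a35 a45 : ℂ) :
    (!![0, a01, a02, a03, a04, a05; -a01, 0, a12, a13, a14, a15; -a02, -a12, 0, a23, a24, a25; -a03, -a13, -a23, 0, a34, a35; -a04, -a14, -a24, -a34, 0, a45; -a05, -a15, -a25, -a35, -a45, 0] : Matrix (Fin 6) (Fin 6) ℂ).det =
    (a01*a23*a45 - a01*a24*a35 + a01*a25*a34 - a02*a13*a45 + a02*a14*a35 - a02*a15*a34 + a03*a12*a45 - a03*a14*a25 + a03*a15*a24 - a04*a12*a35 + a04*a13*a25 - a04*a15*a23 + a05*a12*a34 - a05*a13*a24 + a05*a14*a23)^2 := by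
  simp only [Matrix.det_succ_row_zero, Fin.sum_univ_succ, Fin.sum_univ_zero, Matrix.submatrix_apply, Fin.zero_succAbove, Fin.succ_succAbove_zero, Fin.succ_succAbove_succ, Matrix.of_apply, Matrix.cons_val_zero, Matrix.cons_val_succ, Matrix.det_isEmpty, Fin.val_zero, Fin.val_succ, pow_succ, pow_zero]
  ring

lemma det_eq_pf_sq (M : Form) (h : M.IsSkew) : M.det = pf M ^ 2 := by
  have h' : ∀ i j, M j i = -M i j := by
    intro i j
    have := congrFun (congrFun h i) j
    simpa using this
  have hd : ∀ i, M i i = 0 := fun i => by linear_combination (h' i i) / 2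
  have hM : M = !![0, M 0 1, M 0 2, M 0 3, M 0 4, M 0 5;
      -(M 0 1), 0, M 1 2, M 1 3, M 1 4, M 1 5;
      -(M 0 2), -(M 1 2), 0, M 2 3, M 2 4, M 2 5;
      -(M 0 3), -(M 1 3), -(M 2 3), 0, M 3 4, M 3 5;
      -(M 0 4), -(M 1 4), -(M 2 4), -(M 3 4), 0, M 4 5;
      -(M 0 5), -(M 1 5), -(M 2 5), -(M 3 5), -(M 4 5), 0] := by
    ext i j
    fin_cases i <;> fin_cases j <;>
      first
        | rfl
        | exact hd _
        | exact h' _ _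
  conv_lhs => rw [hM]
  rw [det6_skew]
  unfold pf
  ring

lemma pf_eq_zero (M : Form) (hs : M.IsSkew) (hr : M.rank ≤ 4) : pf M = 0 := by
  have hdet : M.det = 0 := by
    by_contra hne
    have hu : IsUnit M := M.isUnit_iff_isUnit_det.mpr (isUnit_iff_ne_zero.mpr hne)
    have := Matrix.rank_of_isUnit M hu
    rw [this] at hr
    simp at hr
  have := det_eq_pf_sq M hs
  rw [hdet] at this
  exact pow_eq_zero_iff (n := 2) (by norm_num) |>.mp this.symm

set_option maxHeartbeats 2000000 in
lemma pf_expand (β : Form) (a b c : ℂ) :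
    pf (β + a • (wedge (e 0) (e 3) + wedge (e 1) (e 2))
          + b • (wedge (e 0) (e 4) + wedge (e 2) (e 3))
          + c • (wedge (e 0) (e 5) + wedge (e 1) (e 3))) =
    a*a*(β 4 5) - a*b*(β 3 5) + a*(β 0 3)*(β 4 5) - a*(β 0 4)*(β 3 5) + a*(β 0 5)*(β 3 4) + a*(β 1 2)*(β 4 5) - a*(β 1 4)*(β 2 5) + a*(β 1 5)*(β 2 4) + a*(β 3 4)*c - b*b*(β 1 5) + b*(β 0 1)*(β 4 5) - b*(β 0 4)*(β 1 5) + b*(β 0 5)*(β 1 4) - b*(β 1 2)*(β 3 5) + b*(β 1 3)*(β 2 5) + b*(β 1 4)*c - b*(β 1 5)*(β 2 3) + b*(β 2 5)*c + (β 0 1)*(β 2 3)*(β 4 5) - (β 0 1)*(β 2 4)*(β 3 5) + (β 0 1)*(β 2 5)*(β 3 4) - (β 0 2)*(β 1 3)*(β 4 5) + (β 0 2)*(β 1 4)*(β 3 5) - (β 0 2)*(β 1 5)*(β 3 4) - (β 0 2)*(β 4 5)*c + (β 0 3)*(β 1 2)*(β 4 5) - (β 0 3)*(β 1 4)*(β 2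 5) + (β 0 3)*(β 1 5)*(β 2 4) - (β 0 4)*(β 1 2)*(β 3 5) + (β 0 4)*(β 1 3)*(β 2 5) - (β 0 4)*(β 1 5)*(β 2 3) + (β 0 4)*(β 2 5)*c + (β 0 5)*(β 1 2)*(β 3 4) - (β 0 5)*(β 1 3)*(β 2 4) + (β 0 5)*(β 1 4)*(β 2 3) - (β 0 5)*(β 2 4)*c + (β 1 2)*(β 3 4)*c - (β 1 3)*(β 2 4)*c + (β 1 4)*(β 2 3)*c - (β 2 4)*c*c := by
  simp [pf, Matrix.add_apply, Matrix.smul_apply, wedge, Matrix.sub_apply,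
    vecMulVec_apply, e, Pi.single_apply, smul_eq_mul]
  ring

lemma core_extract (β : Form) (key : ∀ a b c : ℂ,
    pf (β + a • (wedge (e 0) (e 3) + wedge (e 1) (e 2))
          + b • (wedge (e 0) (e 4) + wedge (e 2) (e 3))
          + c • (wedge (e 0) (e 5) + wedge (e 1) (e 3))) = 0) :
    β 3 4 = 0 ∧ β 3 5 = 0 ∧ β 4 5 = 0 := by
  have hz : ∀ a b c : ℂ, (a*a*(β 4 5) - a*b*(β 3 5) + a*(β 0 3)*(β 4 5) - a*(β 0 4)*(β 3 5) + a*(β 0 5)*(β 3 4) + a*(β 1 2)*(β 4 5) - a*(β 1 4)*(β 2 5) + a*(β 1 5)*(β 2 4) + a*(β 3 4)*c - b*b*(β 1 5) + b*(β 0 1)*(β 4 5) - b*(β 0 4)*(β 1 5) + b*(β 0 5)*(β 1 4) - b*(β 1 2)*(β 3 5) + b*(β 1 3)*(β 2 5) + b*(β 1 4)*c - b*(β 1 5)*(β 2 3) + b*(β 2 5)*c + (β 0 1)*(β 2 3)*(β 4 5) - (β 0 1)*(β 2 4)*(β 3 5) + (β 0 1)*(β 2 5)*(β 3 4) - (β 0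 2)*(β 1 3)*(β 4 5) + (β 0 2)*(β 1 4)*(β 3 5) - (β 0 2)*(β 1 5)*(β 3 4) - (β 0 2)*(β 4 5)*c + (β 0 3)*(β 1 2)*(β 4 5) - (β 0 3)*(β 1 4)*(β 2 5) + (β 0 3)*(β 1 5)*(β 2 4) - (β 0 4)*(β 1 2)*(β 3 5) + (β 0 4)*(β 1 3)*(β 2 5) - (β 0 4)*(β 1 5)*(β 2 3) + (β 0 4)*(β 2 5)*c + (β 0 5)*(β 1 2)*(β 3 4) - (β 0 5)*(β 1 3)*(β 2 4) + (β 0 5)*(β 1 4)*(β 2 3) - (β 0 5)*(β 2 4)*c + (β 1 2)*(β 3 4)*c - (β 1 3)*(β 2 4)*c + (β 1 4)*(β 2 3)*c - (β 2 4)*c*c) = 0 := fun a b c => (pf_expand β a b c).symm.trans (key a b c)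
  refine ⟨?_, ?_, ?_⟩
  · linear_combination hz 1 0 1 - hz 1 0 0 - hz 0 0 1 + hz 0 0 0
  · linear_combination -(hz 1 1 0 - hz 1 0 0 - hz 0 1 0 + hz 0 0 0)
  · linear_combination (hz 1 0 0 + hz (-1) 0 0 - 2 * hz 0 0 0) / 2

lemma apply_mulVec (M P : Form) (x y : W) :
    Form.apply M (P *ᵥ x) (P *ᵥ y) = Form.apply (Pᵀ * M * P) x y := by
  unfold Form.apply
  rw [Matrix.mul_assoc, ← Matrix.mulVec_mulVec, ← Matrix.mulVec_mulVec,
    Matrix.dotProduct_mulVec x, Matrix.vecMul_transpose, Matrix.mulVec_mulVec]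
lemma apply_e (N : Form) (i j : Fin 6) : Form.apply N (e i) (e j) = N i j := by
  simp [Form.apply, e, Matrix.mulVec_single, single_dotProduct]


set_option maxHeartbeats 1000000 in
/-- a linear system of generic rank ≤ 4 containing a translate of `π_p`
admits a 3-dimensional isotropic subspace; in particular it is nonstable. -/
theorem statement6 (A : Submodule ℂ Form) (hA : ∀ M ∈ A, Form.IsSkew M)
    (hrk : ∀ M ∈ A, Matrix.rank M ≤ 4)
    (g : GL (Fin 6) ℂ)
    (hg : Submodule.map (actLin (g : Matrix (Fin 6) (Fin 6) ℂ)) pi_p ≤ A) :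
    (∃ U : Submodule ℂ W, Module.finrank ℂ U = 3 ∧
      ∀ α ∈ A, ∀ u ∈ U, ∀ u' ∈ U, Form.apply α u u' = 0) ∧ Nonstable A := by
  set G : Matrix (Fin 6) (Fin 6) ℂ := (g : Matrix (Fin 6) (Fin 6) ℂ) with hGdef
  set G' : Matrix (Fin 6) (Fin 6) ℂ := ((g⁻¹ : GL (Fin 6) ℂ) : Matrix (Fin 6) (Fin 6) ℂ) with hG'def
  have h1 : G * G' = 1 := Units.mul_inv g
  have h2 : G' * G = 1 := Units.inv_mul g
  set B : Submodule ℂ Form := Submodule.map (actLin G') A with hBdef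
  have hActInv : ∀ M : Form, actLin G' (actLin G M) = M := by
    intro M
    show G'ᵀ * (Gᵀ * M * G) * G' = M
    have ht : G'ᵀ * Gᵀ = 1 := by rw [← Matrix.transpose_mul, h1, Matrix.transpose_one]
    calc G'ᵀ * (Gᵀ * M * G) * G' = (G'ᵀ * Gᵀ) * M * (G * G') := by noncomm_ring
    _ = M := by rw [ht, h1, Matrix.one_mul, Matrix.mul_one]
  have hBpi : pi_p ≤ B := by
    intro M hM
    exact ⟨actLin G M, hg (Submodule.mem_map_of_mem hM), hActInv M⟩
  have hBskew : ∀ M ∈ B, M.IsSkew := by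
    rintro M ⟨α, hα, rfl⟩
    have hs := hA α hα
    show (G'ᵀ * α * G')ᵀ = -(G'ᵀ * α * G')
    rw [Matrix.transpose_mul, Matrix.transpose_mul, Matrix.transpose_transpose]
    rw [Form.IsSkew] at hs
    rw [hs]
    noncomm_ring
  have hBrk : ∀ M ∈ B, M.rank ≤ 4 := by
    rintro M ⟨α, hα, rfl⟩
    show (G'ᵀ * α * G').rank ≤ 4
    calc (G'ᵀ * α * G').rank ≤ (G'ᵀ * α).rank := Matrix.rank_mul_le_left _ _
    _ ≤ α.rank := Matrix.rank_mul_le_right _ _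
    _ ≤ 4 := hrk α hα
  have w1mem : (wedge (e 0) (e 3) + wedge (e 1) (e 2)) ∈ pi_p :=
    Submodule.subset_span (Set.mem_insert _ _)
  have w2mem : (wedge (e 0) (e 4) + wedge (e 2) (e 3)) ∈ pi_p :=
    Submodule.subset_span (Set.mem_insert_of_mem _ (Set.mem_insert _ _))
  have w3mem : (wedge (e 0) (e 5) + wedge (e 1) (e 3)) ∈ pi_p :=
    Submodule.subset_span (Set.mem_insert_of_mem _ (Set.mem_insert_of_mem _ rfl))
  have core : ∀ M ∈ B, M 3 4 = 0 ∧ M 3 5 = 0 ∧ M 4 5 = 0 := by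
    intro M hM
    refine core_extract M (fun a b c => ?_)
    have hmem : M + a • (wedge (e 0) (e 3) + wedge (e 1) (e 2))
          + b • (wedge (e 0) (e 4) + wedge (e 2) (e 3))
          + c • (wedge (e 0) (e 5) + wedge (e 1) (e 3)) ∈ B :=
      Submodule.add_mem _ (Submodule.add_mem _ (Submodule.add_mem _ hM
        (Submodule.smul_mem _ _ (hBpi w1mem))) (Submodule.smul_mem _ _ (hBpi w2mem)))
        (Submodule.smul_mem _ _ (hBpi w3mem))
    exact pf_eq_zero _ (hBskew _ hmem) (hBrk _ hmem)
  -- the isotropic subspace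
  set ι : Fin 3 → Fin 6 := ![3, 4, 5] with hι
  set v : Fin 3 → W := fun k => G' *ᵥ e (ι k) with hv
  have hinj : Function.Injective (Matrix.mulVecLin G') := by
    intro x y hxy
    have h3 := congrArg (fun z => G *ᵥ z) hxy
    simpa [Matrix.mulVecLin_apply, Matrix.mulVec_mulVec, h1] using h3
  have hlin : LinearIndependent ℂ v := by
    have hιinj : Function.Injective ι := by decide
    have h0 := (Pi.basisFun ℂ (Fin 6)).linearIndependent.comp ι hιinj
    have heq : (⇑(Pi.basisFun ℂ (Fin 6)) ∘ ι) = fun k => e (ι k) := by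
      funext k; simp [e]
    rw [heq] at h0
    have h4 := h0.map' (Matrix.mulVecLin G') (LinearMap.ker_eq_bot.mpr hinj)
    exact h4
  set U : Submodule ℂ W := Submodule.span ℂ (Set.range v) with hU
  have hrank : Module.finrank ℂ U = 3 := by
    rw [hU, finrank_span_eq_card hlin]; simp
  have hiso : ∀ α ∈ A, ∀ u ∈ U, ∀ u' ∈ U, Form.apply α u u' = 0 := by
    intro α hα
    have hβB : G'ᵀ * α * G' ∈ B := ⟨α, hα, rfl⟩
    obtain ⟨hb34, hb35, hb45⟩ := core _ hβB
    have hbskew := hBskew _ hβB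
    have h' : ∀ i j, (G'ᵀ * α * G') j i = -(G'ᵀ * α * G') i j := by
      intro i j
      have := congrFun (congrFun hbskew i) j
      simpa using this
    have hd : ∀ i : Fin 6, (G'ᵀ * α * G') i i = 0 := fun i => by linear_combination (h' i i) / 2
    have base : ∀ k l : Fin 3, Form.apply α (v k) (v l) = 0 := by
      intro k l
      have hkl : Form.apply α (v k) (v l) = (G'ᵀ * α * G') (ι k) (ι l) := by
        rw [hv]
        rw [apply_mulVec, apply_e]
      rw [hkl]
      fin_cases k <;> fin_cases l <;>
        simp [hι, hd 3, hd 4, hd 5, hb34, hb35, hb45, h' 3 4, h' 3 5, h' 4 5]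
    intro u hu u' hu'
    refine Submodule.span_induction₂ (p := fun x y _ _ => Form.apply α x y = 0)
      (fun x y hx hy => ?_) (fun y _ => ?_) (fun x _ => ?_)
      (fun x y z _ _ _ hxz hyz => ?_) (fun x y z _ _ _ hxy hxz => ?_)
      (fun r x y _ _ hxy => ?_) (fun r x y _ _ hxy => ?_) hu hu'
    · obtain ⟨k, rfl⟩ := hx
      obtain ⟨l, rfl⟩ := hy
      exact base k l
    · simp [Form.apply]
    · simp [Form.apply]
    · have : Form.apply α (x + y) z = Form.apply α x z + Form.apply α y z := by
        simp [Form.apply, add_dotProduct]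
      show Form.apply α (x + y) z = 0
      rw [this, show Form.apply α x z = 0 from hxz, show Form.apply α y z = 0 from hyz, add_zero]
    · have : Form.apply α x (y + z) = Form.apply α x y + Form.apply α x z := by
        simp [Form.apply, Matrix.mulVec_add, dotProduct_add]
      show Form.apply α x (y + z) = 0
      rw [this, show Form.apply α x y = 0 from hxy, show Form.apply α x z = 0 from hxz, add_zero]
    · have : Form.apply α (r • x) y = r * Form.apply α x y := by
        simp [Form.apply, smul_dotProduct]
      show Form.apply α (r • x) y = 0
      rw [this, show Form.apply α x y = 0 from hxy, mul_zero]
    · have : Form.apply α x (r • y) = r * Form.apply α x y := by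
        simp [Form.apply, Matrix.mulVec_smul, dotProduct_smul]
      show Form.apply α x (r • y) = 0
      rw [this, show Form.apply α x y = 0 from hxy, mul_zero]
  refine ⟨⟨U, hrank, hiso⟩, 3, by norm_num, U, U, le_rfl, hrank, by rw [hrank], hiso⟩
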